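/- Let (B_n)_{n≥0} be a γ-periodic sequence of subsets of E, F_0 = E ∖ B_0, and τ(B) = inf{m ≥ 0 : X_m ∈ B_m}. Define a transition kernel q on E by q(x, A) = P_x(X_γ ∈ A, τ(B) > γ) for x ∈ F_0 and A ⊆ F_0, q(x, B_0) = 1 − q(x, F_0) for x ∈ F_0, and let Z = (Z_n)_{n≥0} be a Markov chain on E with transition kernel q; set τ̃_{B_0} = inf{n ≥ 0 : Z_n ∈ B_0}. Then for every initial probability measure μ on E, every n ≥ 1, and all bounded functions φ_1, …, φ_n on E: E_μ[φ_1(X_γ)·…·φ_n(X_{nγ}) 1_{τ(B) > nγ}] = E_μ[φ_1(Z_1)·…·φ_n(Z_n) 1_{τ̃_{B_0} > n}]. Consequently, whenever P_μ(τ(B) > nγ) > 0, P_μ((X_γ, …, X_{nγ}) ∈ · | τ(B) > nγ) = P_μ((Z_1, …, Z_n) ∈ · | τ̃_{B_0} > n). -/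

import Mathlib

variable {E : Type*}

/-- The index `(i+1)·γ` inside `Fin (n·γ + 1)`. -/
def blockIdx (γ n : ℕ) (i : Fin n) : Fin (n * γ + 1) :=
  ⟨(i.1 + 1) * γ, Nat.lt_succ_of_le (Nat.mul_le_mul_right γ i.isLt)⟩

/-- `E_μ[φ₁(X_γ) ⋯ φ_n(X_{nγ}) 1_{τ(B) > nγ}]` for the Markov chain `X` with transition
matrix `P` started from `μ`, where `τ(B) = inf {m | X_m ∈ B_m}`, written as a sum over all
paths of length `n·γ`. -/
noncomputable def blockExpX [Fintype E] [DecidableEq E] (P : E → E → ℝ) (B : ℕ → Finset E)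
    (μ : E → ℝ) (γ n : ℕ) (φ : Fin n → E → ℝ) : ℝ :=
  ∑ ω : Fin (n * γ + 1) → E,
    if ∀ k : Fin (n * γ + 1), ω k ∉ B (k : ℕ) then
      μ (ω 0) * (∏ i : Fin (n * γ), P (ω i.castSucc) (ω i.succ)) *
        ∏ i : Fin n, φ i (ω (blockIdx γ n i))
    else 0

/-- `E_μ[φ₁(Z_1) ⋯ φ_n(Z_n) 1_{τ̃_{B₀} > n}]` for the Markov chain `Z` with transition
kernel `q` started from `μ`, where `τ̃_{B₀} = inf {m | Z_m ∈ B₀}`. -/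
noncomputable def blockExpZ [Fintype E] [DecidableEq E] (q : E → E → ℝ) (B0 : Finset E)
    (μ : E → ℝ) (n : ℕ) (φ : Fin n → E → ℝ) : ℝ :=
  ∑ ω : Fin (n + 1) → E,
    if ∀ k : Fin (n + 1), ω k ∉ B0 then
      μ (ω 0) * (∏ i : Fin n, q (ω i.castSucc) (ω i.succ)) * ∏ i : Fin n, φ i (ω i.succ)
    else 0

section Aux

variable [Fintype E] [DecidableEq E]

private lemma ite_and_mul (p r : Prop) [Decidable p] [Decidable r] (a b : ℝ) :
    (if p ∧ r then a * b else 0) = (if p then a else 0) * (if r then b else 0) := by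
  split_ifs <;> simp_all

/-- updated initial measure after absorbing one block -/
noncomputable def nextNu (q : E → E → ℝ) (B0 : Finset E) (ν : E → ℝ) (φ0 : E → ℝ) : E → ℝ :=
  fun y => if y ∉ B0 then (∑ x, if x ∉ B0 then ν x * q x y else 0) * φ0 y else 0

lemma sum_cons (n : ℕ) (g : (Fin (n + 1) → E) → ℝ) :
    ∑ ω : Fin (n + 1) → E, g ω = ∑ x : E, ∑ t : Fin n → E, g (Fin.cons x t) := by
  rw [show (∑ ω : Fin (n + 1) → E, g ω)
        = ∑ p : E × (Fin n → E), g (Fin.cons p.1 p.2) from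
      (Fintype.sum_equiv (Fin.consEquiv fun _ => E) _ _ (fun p => rfl)).symm,
    Fintype.sum_prod_type]

lemma Zstep (q : E → E → ℝ) (B0 : Finset E) (ν : E → ℝ) (n : ℕ) (φ : Fin (n + 1) → E → ℝ) :
    blockExpZ q B0 ν (n + 1) φ
      = blockExpZ q B0 (nextNu q B0 ν (φ 0)) n (fun i => φ i.succ) := by
  unfold blockExpZ
  rw [sum_cons (n + 1), Finset.sum_comm]
  refine Finset.sum_congr rfl fun t _ => ?_
  beta_reduce
  by_cases hC : ∀ k : Fin (n + 1), t k ∉ B0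
  · have ht0 : t 0 ∉ B0 := hC 0
    rw [if_pos hC]
    have hsum : ∀ x : E,
        (if ∀ k : Fin (n + 1 + 1), (Fin.cons x t : Fin (n + 1 + 1) → E) k ∉ B0 then
            ν x * (∏ i : Fin (n + 1),
                q ((Fin.cons x t : Fin (n + 1 + 1) → E) i.castSucc)
                  ((Fin.cons x t : Fin (n + 1 + 1) → E) i.succ)) *
              ∏ i : Fin (n + 1), φ i ((Fin.cons x t : Fin (n + 1 + 1) → E) i.succ)
          else 0)
          = (if x ∉ B0 then ν x * q x (t 0) else 0) *
            (φ 0 (t 0) * ((∏ i : Fin n, q (t i.castSucc) (t i.succ)) *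
              ∏ i : Fin n, φ i.succ (t i.succ))) := by
      intro x
      have hcond : (∀ k : Fin (n + 1 + 1), (Fin.cons x t : Fin (n + 1 + 1) → E) k ∉ B0) ↔ x ∉ B0 := by
        rw [Fin.forall_fin_succ]
        simp [hC]
      rw [Fin.prod_univ_succ, Fin.prod_univ_succ]
      simp only [Fin.cons_zero, Fin.cons_succ, Fin.castSucc_zero, ← Fin.succ_castSucc, hcond]
      split_ifs with h
      · ring
      · ring
    refine Eq.trans (Finset.sum_congr rfl fun x _ => hsum x) ?_
    rw [← Finset.sum_mul]
    simp only [nextNu, ht0, if_true, not_false_iff]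
    ring
  · rw [if_neg hC]
    refine Finset.sum_eq_zero fun x _ => ?_
    rw [if_neg]
    intro h
    exact hC fun k => by simpa using h k.succ

lemma baseZ (q : E → E → ℝ) (B0 : Finset E) (ν : E → ℝ) (φ : Fin 0 → E → ℝ) :
    blockExpZ q B0 ν 0 φ = ∑ x, if x ∉ B0 then ν x else 0 := by
  unfold blockExpZ
  apply Fintype.sum_equiv (Equiv.funUnique (Fin 1) E)
  intro ω
  simp [Fin.forall_fin_one]

lemma baseX (P : E → E → ℝ) (B : ℕ → Finset E) (ν : E → ℝ) (γ : ℕ) (φ : Fin 0 → E → ℝ) :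
    blockExpX P B ν γ 0 φ = ∑ x, if x ∉ B 0 then ν x else 0 := by
  haveI : IsEmpty (Fin (0 * γ)) := ⟨fun k => by have := k.isLt; omega⟩
  haveI hu : Unique (Fin (0 * γ + 1)) :=
    ⟨⟨⟨0, by omega⟩⟩, fun k => Fin.ext (by have := k.isLt; simp; omega)⟩
  unfold blockExpX
  apply Fintype.sum_equiv (Equiv.funUnique (Fin (0 * γ + 1)) E)
  intro ω
  have hall : (∀ k : Fin (0 * γ + 1), ω k ∉ B (k : ℕ)) ↔ ω 0 ∉ B 0 := by
    constructor
    · intro h; simpa using h 0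
    · intro h k; rw [Subsingleton.elim k (0 : Fin (0 * γ + 1))]; simpa using h
  have hωd : (Equiv.funUnique (Fin (0 * γ + 1)) E) ω = ω 0 := congrArg ω (Subsingleton.elim _ _)
  rw [if_congr hall rfl rfl]
  simp [hωd]

def glue (γ n : ℕ) (α : Fin (γ + 1) → E) (β : Fin (n * γ) → E) : Fin ((n + 1) * γ + 1) → E :=
  fun k => if h : (k : ℕ) < γ + 1 then α ⟨k, h⟩
    else β ⟨(k : ℕ) - (γ + 1), by
      have hm : (n + 1) * γ = n * γ + γ := Nat.succ_mul n γ
      have := k.isLt; omega⟩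

def glueEquiv (γ n : ℕ) : ((Fin (γ + 1) → E) × (Fin (n * γ) → E)) ≃ (Fin ((n + 1) * γ + 1) → E) where
  toFun p := glue γ n p.1 p.2
  invFun ω :=
    (fun i => ω ⟨i, by have hm : (n + 1) * γ = n * γ + γ := Nat.succ_mul n γ
                       have := i.isLt; omega⟩,
     fun j => ω ⟨(j : ℕ) + (γ + 1), by
        have hm : (n + 1) * γ = n * γ + γ := Nat.succ_mul n γ
        have := j.isLt; omega⟩)
  left_inv p := by
    refine Prod.ext ?_ ?_
    · funext i
      show glue γ n p.1 p.2 _ = _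
      simp only [glue]
      rw [dif_pos i.isLt]
    · funext j
      show glue γ n p.1 p.2 _ = _
      simp only [glue]
      rw [dif_neg (by simp <;> omega)]
      exact congrArg p.2 (Fin.ext (by simp))
  right_inv ω := by
    funext k
    show glue γ n _ _ k = ω k
    simp only [glue]
    by_cases h : (k : ℕ) < γ + 1
    · rw [dif_pos h]
    · rw [dif_neg h]
      exact congrArg ω (Fin.ext (by simp <;> omega))

lemma sum_glue (γ n : ℕ) (f : (Fin ((n + 1) * γ + 1) → E) → ℝ) :
    ∑ ω : Fin ((n + 1) * γ + 1) → E, f ω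
      = ∑ α : Fin (γ + 1) → E, ∑ β : Fin (n * γ) → E, f (glue γ n α β) := by
  rw [show (∑ ω : Fin ((n + 1) * γ + 1) → E, f ω)
        = ∑ p : (Fin (γ + 1) → E) × (Fin (n * γ) → E), f (glue γ n p.1 p.2) from
      (Fintype.sum_equiv (glueEquiv γ n) (fun p => f (glue γ n p.1 p.2)) f (fun p => rfl)).symm,
    Fintype.sum_prod_type]

lemma glue_lt {γ n : ℕ} (α : Fin (γ + 1) → E) (β : Fin (n * γ) → E)
    (k : Fin ((n + 1) * γ + 1)) (h : (k : ℕ) < γ + 1) :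
    glue γ n α β k = α ⟨k, h⟩ := dif_pos h

lemma glue_ge {γ n : ℕ} (α : Fin (γ + 1) → E) (β : Fin (n * γ) → E)
    (k : Fin ((n + 1) * γ + 1)) (h : ¬ (k : ℕ) < γ + 1) :
    glue γ n α β k = β ⟨(k : ℕ) - (γ + 1), by
      have hm : (n + 1) * γ = n * γ + γ := by ring
      have := k.isLt; omega⟩ := dif_neg h

lemma glue_eq_tail {γ n : ℕ} (α : Fin (γ + 1) → E) (β : Fin (n * γ) → E)
    (k : Fin ((n + 1) * γ + 1)) (j : Fin (n * γ + 1)) (hk : (k : ℕ) = γ + (j : ℕ)) :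
    glue γ n α β k = (Fin.cons (α (Fin.last γ)) β : Fin (n * γ + 1) → E) j := by
  rcases j with ⟨jv, hj⟩
  cases jv with
  | zero =>
      simp only [Fin.mk_zero, Fin.cons_zero] at *
      rw [glue_lt α β k (by omega)]
      exact congrArg α (Fin.ext (by simp <;> omega))
  | succ jv =>
      have hs : (⟨jv + 1, hj⟩ : Fin (n * γ + 1)) = Fin.succ ⟨jv, by omega⟩ := rfl
      rw [hs, Fin.cons_succ, glue_ge α β k (by simp at hk; omega)]
      exact congrArg β (Fin.ext (by simp at hk ⊢; omega))

@[simp] lemma blockIdx_val (γ n : ℕ) (i : Fin n) :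
    ((blockIdx γ n i : Fin (n * γ + 1)) : ℕ) = ((i : ℕ) + 1) * γ := rfl

/-- first-block weight -/
private noncomputable def FA (P : E → E → ℝ) (B : ℕ → Finset E) (ν : E → ℝ) (γ : ℕ)
    (α : Fin (γ + 1) → E) : ℝ :=
  if ∀ k : Fin (γ + 1), α k ∉ B (k : ℕ) then
    ν (α 0) * ∏ i : Fin γ, P (α i.castSucc) (α i.succ)
  else 0

/-- tail weight, as a function of the tail `β` and the junction point `y` -/
private noncomputable def GT (P : E → E → ℝ) (B : ℕ → Finset E) (γ n : ℕ)
    (φ0 : E → ℝ) (ψ : Fin n → E → ℝ) (β : Fin (n * γ) → E) (y : E) : ℝ :=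
  if ∀ k : Fin (n * γ + 1), (Fin.cons y β : Fin (n * γ + 1) → E) k ∉ B (k : ℕ) then
    φ0 y * ((∏ i : Fin (n * γ), P ((Fin.cons y β : Fin (n * γ + 1) → E) i.castSucc)
        ((Fin.cons y β : Fin (n * γ + 1) → E) i.succ)) *
      ∏ i : Fin n, ψ i ((Fin.cons y β : Fin (n * γ + 1) → E) (blockIdx γ n i)))
  else 0

lemma sum_fiber_last (γ : ℕ) (f : (Fin (γ + 1) → E) → ℝ) (g : E → ℝ) :
    ∑ α : Fin (γ + 1) → E, f α * g (α (Fin.last γ))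
      = ∑ y : E, (∑ α : Fin (γ + 1) → E, if α (Fin.last γ) = y then f α else 0) * g y := by
  simp_rw [Finset.sum_mul, ite_mul, zero_mul]
  rw [Finset.sum_comm]
  refine Finset.sum_congr rfl fun α _ => ?_
  rw [Finset.sum_ite_eq]
  simp

lemma Xstep (P : E → E → ℝ) (γ : ℕ) (hγ : 1 ≤ γ) (B : ℕ → Finset E)
    (hper : ∀ m : ℕ, B (m + γ) = B m)
    (q : E → E → ℝ)
    (hq : ∀ x ∉ B 0, ∀ y ∉ B 0,
      q x y = ∑ ω : Fin (γ + 1) → E,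
        if ω 0 = x ∧ ω (Fin.last γ) = y ∧ ∀ k : Fin (γ + 1), ω k ∉ B (k : ℕ) then
          ∏ i : Fin γ, P (ω i.castSucc) (ω i.succ)
        else 0)
    (ν : E → ℝ) (n : ℕ) (φ : Fin (n + 1) → E → ℝ) :
    blockExpX P B ν γ (n + 1) φ
      = blockExpX P B (nextNu q (B 0) ν (φ 0)) γ n (fun i => φ i.succ) := by
  have hm : (n + 1) * γ = n * γ + γ := Nat.succ_mul n γ
  have hBγ : B γ = B 0 := by simpa using hper 0
  have hγn : γ + n * γ = (n + 1) * γ := by omega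
  -- pointwise factorization of the glued path weight
  have hpt : ∀ (α : Fin (γ + 1) → E) (β : Fin (n * γ) → E),
      (if ∀ k : Fin ((n + 1) * γ + 1), glue γ n α β k ∉ B (k : ℕ) then
          ν (glue γ n α β 0) *
            (∏ i : Fin ((n + 1) * γ), P (glue γ n α β i.castSucc) (glue γ n α β i.succ)) *
            ∏ i : Fin (n + 1), φ i (glue γ n α β (blockIdx γ (n + 1) i))
        else 0)
      = FA P B ν γ α * GT P B γ n (φ 0) (fun i => φ i.succ) β (α (Fin.last γ)) := by
    intro α β
    have hcond : (∀ k : Fin ((n + 1) * γ + 1), glue γ n α β k ∉ B (k : ℕ))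
        ↔ ((∀ k : Fin (γ + 1), α k ∉ B (k : ℕ)) ∧
            ∀ k : Fin (n * γ + 1),
              (Fin.cons (α (Fin.last γ)) β : Fin (n * γ + 1) → E) k ∉ B (k : ℕ)) := by
      constructor
      · intro h
        constructor
        · intro k
          have h2 := h ⟨(k : ℕ), by omega⟩
          rw [glue_lt α β _ (by simpa using k.isLt)] at h2
          simpa using h2
        · intro k
          have h2 := h ⟨γ + (k : ℕ), by omega⟩
          rw [glue_eq_tail α β _ k (by simp)] at h2
          have hB : B (γ + (k : ℕ)) = B (k : ℕ) := by rw [Nat.add_comm, hper]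
          simpa [hB] using h2
      · rintro ⟨hA, hT⟩ k
        by_cases hk : (k : ℕ) < γ + 1
        · rw [glue_lt α β k hk]
          simpa using hA ⟨k, hk⟩
        · have hjlt : (k : ℕ) - γ < n * γ + 1 := by have := k.isLt; omega
          rw [glue_eq_tail α β k ⟨(k : ℕ) - γ, hjlt⟩ (by simp <;> omega)]
          have hB : B ((k : ℕ)) = B ((k : ℕ) - γ) := by
            conv_lhs => rw [show (k : ℕ) = ((k : ℕ) - γ) + γ by omega]
            rw [hper]
          rw [hB]
          simpa using hT ⟨(k : ℕ) - γ, hjlt⟩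
    have hν : glue γ n α β 0 = α 0 := by
      rw [glue_lt α β 0 (by simp)]
      exact congrArg α (Fin.ext (by simp))
    have hP : (∏ i : Fin ((n + 1) * γ), P (glue γ n α β i.castSucc) (glue γ n α β i.succ))
        = (∏ i : Fin γ, P (α i.castSucc) (α i.succ)) *
          ∏ i : Fin (n * γ),
            P ((Fin.cons (α (Fin.last γ)) β : Fin (n * γ + 1) → E) i.castSucc)
              ((Fin.cons (α (Fin.last γ)) β : Fin (n * γ + 1) → E) i.succ) := by
      rw [← Equiv.prod_comp (finCongr hγn)
        (fun i => P (glue γ n α β i.castSucc) (glue γ n α β i.succ)), Fin.prod_univ_add]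
      congr 1
      · refine Finset.prod_congr rfl fun i _ => ?_
        have e1 : glue γ n α β ((finCongr hγn (Fin.castAdd (n * γ) i)).castSucc)
            = α i.castSucc := by
          rw [glue_lt α β _ (by simp <;> omega)]
          exact congrArg α (Fin.ext (by simp))
        have e2 : glue γ n α β ((finCongr hγn (Fin.castAdd (n * γ) i)).succ) = α i.succ := by
          rw [glue_lt α β _ (by simp <;> omega)]
          exact congrArg α (Fin.ext (by simp))
        rw [e1, e2]
      · refine Finset.prod_congr rfl fun i _ => ?_
        have e1 : glue γ n α β ((finCongr hγn (Fin.natAdd γ i)).castSucc)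
            = (Fin.cons (α (Fin.last γ)) β : Fin (n * γ + 1) → E) i.castSucc := by
          rw [glue_eq_tail α β _ i.castSucc (by simp)]
        have e2 : glue γ n α β ((finCongr hγn (Fin.natAdd γ i)).succ)
            = (Fin.cons (α (Fin.last γ)) β : Fin (n * γ + 1) → E) i.succ := by
          rw [glue_eq_tail α β _ i.succ (by simp <;> omega)]
        rw [e1, e2]
    have hφ : (∏ i : Fin (n + 1), φ i (glue γ n α β (blockIdx γ (n + 1) i)))
        = φ 0 (α (Fin.last γ)) *
          ∏ i : Fin n, φ i.succ
            ((Fin.cons (α (Fin.last γ)) β : Fin (n * γ + 1) → E) (blockIdx γ n i)) := by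
      rw [Fin.prod_univ_succ]
      have e0 : glue γ n α β (blockIdx γ (n + 1) 0) = α (Fin.last γ) := by
        rw [glue_lt α β _ (by simp <;> omega)]
        exact congrArg α (Fin.ext (by simp <;> omega))
      rw [e0]
      congr 1
      refine Finset.prod_congr rfl fun i _ => ?_
      rw [glue_eq_tail α β _ (blockIdx γ n i) (by simp <;> ring)]
    have hval : ν (glue γ n α β 0) *
          (∏ i : Fin ((n + 1) * γ), P (glue γ n α β i.castSucc) (glue γ n α β i.succ)) *
          ∏ i : Fin (n + 1), φ i (glue γ n α β (blockIdx γ (n + 1) i))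
        = (ν (α 0) * ∏ i : Fin γ, P (α i.castSucc) (α i.succ)) *
          (φ 0 (α (Fin.last γ)) *
            ((∏ i : Fin (n * γ),
                P ((Fin.cons (α (Fin.last γ)) β : Fin (n * γ + 1) → E) i.castSucc)
                  ((Fin.cons (α (Fin.last γ)) β : Fin (n * γ + 1) → E) i.succ)) *
              ∏ i : Fin n, φ i.succ
                ((Fin.cons (α (Fin.last γ)) β : Fin (n * γ + 1) → E) (blockIdx γ n i)))) := by
      rw [hν, hP, hφ]; ring
    rw [if_congr hcond hval rfl, ite_and_mul]
    rfl
  have hinner : ∀ y : E,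
      (∑ α : Fin (γ + 1) → E, if α (Fin.last γ) = y then FA P B ν γ α else 0)
        = (if y ∉ B 0 then ∑ x, if x ∉ B 0 then ν x * q x y else 0 else 0) := by
    intro y
    by_cases hy : y ∉ B 0
    · rw [if_pos hy]
      have hstep : ∀ α : Fin (γ + 1) → E,
          (if α (Fin.last γ) = y then FA P B ν γ α else 0)
            = ∑ x : E, if x ∉ B 0 ∧ α 0 = x ∧ α (Fin.last γ) = y ∧
                  ∀ k : Fin (γ + 1), α k ∉ B (k : ℕ) then
                ν x * ∏ i : Fin γ, P (α i.castSucc) (α i.succ) else 0 := by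
        intro α
        have hval0 : (∀ k : Fin (γ + 1), α k ∉ B (k : ℕ)) → α 0 ∉ B 0 := fun hc => by
          simpa using hc 0
        have hxc : ∀ x : E,
            (x ∉ B 0 ∧ α 0 = x ∧ α (Fin.last γ) = y ∧ ∀ k : Fin (γ + 1), α k ∉ B (k : ℕ))
              ↔ (α 0 = x ∧ (α (Fin.last γ) = y ∧ ∀ k : Fin (γ + 1), α k ∉ B (k : ℕ))) := by
          intro x
          constructor
          · rintro ⟨_, h2, h3, h4⟩; exact ⟨h2, h3, h4⟩
          · rintro ⟨h2, h3, h4⟩; exact ⟨h2 ▸ hval0 h4, h2, h3, h4⟩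
        symm
        simp_rw [hxc, ite_and]
        rw [Finset.sum_ite_eq]
        simp only [Finset.mem_univ, if_true]
        rw [FA]
      refine Eq.trans (Finset.sum_congr rfl fun α _ => hstep α) ?_
      rw [Finset.sum_comm]
      refine Finset.sum_congr rfl fun x _ => ?_
      by_cases hx : x ∉ B 0
      · rw [if_pos hx, hq x hx y hy, Finset.mul_sum]
        refine Finset.sum_congr rfl fun α _ => ?_
        rw [mul_ite, mul_zero]
        exact if_congr (by tauto) rfl rfl
      · rw [if_neg hx]
        exact Finset.sum_eq_zero fun α _ => if_neg (by tauto)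
    · rw [if_neg hy]
      refine Finset.sum_eq_zero fun α _ => ?_
      rw [FA]
      split_ifs with h1 h2 <;> try rfl
      exact absurd (h1 ▸ (show α (Fin.last γ) ∉ B 0 by
        simpa [hBγ] using h2 (Fin.last γ))) hy
  have hmerge : ∀ (y : E) (β : Fin (n * γ) → E),
      (if y ∉ B 0 then ∑ x, if x ∉ B 0 then ν x * q x y else 0 else 0) *
          GT P B γ n (φ 0) (fun i => φ i.succ) β y
        = (if ∀ k : Fin (n * γ + 1), (Fin.cons y β : Fin (n * γ + 1) → E) k ∉ B (k : ℕ) then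
            nextNu q (B 0) ν (φ 0) ((Fin.cons y β : Fin (n * γ + 1) → E) 0) *
              (∏ i : Fin (n * γ), P ((Fin.cons y β : Fin (n * γ + 1) → E) i.castSucc)
                ((Fin.cons y β : Fin (n * γ + 1) → E) i.succ)) *
              ∏ i : Fin n, φ i.succ ((Fin.cons y β : Fin (n * γ + 1) → E) (blockIdx γ n i))
          else 0) := by
    intro y β
    simp only [GT, nextNu, Fin.cons_zero]
    split_ifs <;> ring
  have hstep2 : ∀ β : Fin (n * γ) → E,
      (∑ α : Fin (γ + 1) → E,
          FA P B ν γ α * GT P B γ n (φ 0) (fun i => φ i.succ) β (α (Fin.last γ)))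
        = ∑ y : E, (if y ∉ B 0 then ∑ x, if x ∉ B 0 then ν x * q x y else 0 else 0) *
            GT P B γ n (φ 0) (fun i => φ i.succ) β y := by
    intro β
    rw [sum_fiber_last γ (FA P B ν γ) (GT P B γ n (φ 0) (fun i => φ i.succ) β)]
    exact Finset.sum_congr rfl fun y _ => by rw [hinner y]
  unfold blockExpX
  rw [sum_glue]
  refine Eq.trans (Finset.sum_congr rfl fun α _ => Finset.sum_congr rfl fun β _ => hpt α β) ?_
  rw [Finset.sum_comm]
  refine Eq.trans (Finset.sum_congr rfl fun β _ => hstep2 β) ?_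
  rw [Finset.sum_comm]
  rw [sum_cons (n * γ)]
  exact Finset.sum_congr rfl fun y _ => Finset.sum_congr rfl fun β _ => hmerge y β

end Aux

/-- Reduction of a `γ`-periodically moving boundary to a fixed one: if `q` is a transition
kernel which on `F₀ = E ∖ B₀` coincides with `q(x, y) = P_x(X_γ = y, τ(B) > γ)` (and sends the
remaining mass to `B₀`), and `Z` is a Markov chain with kernel `q`, then for all bounded
`φ₁, …, φ_n`, `E_μ[φ₁(X_γ)⋯φ_n(X_{nγ}) 1_{τ(B) > nγ}] = E_μ[φ₁(Z_1)⋯φ_n(Z_n) 1_{τ̃_{B₀} > n}]`;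
consequently the conditional laws of `(X_γ, …, X_{nγ})` given `τ(B) > nγ` and of
`(Z_1, …, Z_n)` given `τ̃_{B₀} > n` coincide whenever `P_μ(τ(B) > nγ) > 0`. -/
theorem moving_to_fixed_boundary_reduction [Fintype E] [DecidableEq E]
    (P : E → E → ℝ) (hPnn : ∀ x y, 0 ≤ P x y) (hPsum : ∀ x, ∑ y, P x y = 1)
    (γ : ℕ) (hγ : 1 ≤ γ) (B : ℕ → Finset E) (hper : ∀ n : ℕ, B (n + γ) = B n)
    (q : E → E → ℝ) (hqnn : ∀ x y, 0 ≤ q x y) (hqsum : ∀ x, ∑ y, q x y = 1)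
    (hq : ∀ x ∉ B 0, ∀ y ∉ B 0,
      q x y = ∑ ω : Fin (γ + 1) → E,
        if ω 0 = x ∧ ω (Fin.last γ) = y ∧ ∀ k : Fin (γ + 1), ω k ∉ B (k : ℕ) then
          ∏ i : Fin γ, P (ω i.castSucc) (ω i.succ)
        else 0)
    (μ : E → ℝ) (hμnn : ∀ x, 0 ≤ μ x) (hμsum : ∑ x, μ x = 1) :
    ∀ n : ℕ, 1 ≤ n →
      (∀ φ : Fin n → E → ℝ, blockExpX P B μ γ n φ = blockExpZ q (B 0) μ n φ) ∧
      (0 < blockExpX P B μ γ n (fun _ _ => 1) →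
        ∀ y : Fin n → E,
          blockExpX P B μ γ n (fun i z => if z = y i then 1 else 0) /
              blockExpX P B μ γ n (fun _ _ => 1) =
            blockExpZ q (B 0) μ n (fun i z => if z = y i then 1 else 0) /
              blockExpZ q (B 0) μ n (fun _ _ => 1)) := by
  have key : ∀ m : ℕ, ∀ ν : E → ℝ, ∀ φ : Fin m → E → ℝ,
      blockExpX P B ν γ m φ = blockExpZ q (B 0) ν m φ := by
    intro m
    induction m with
    | zero => intro ν φ; rw [baseX, baseZ]
    | succ k ih =>
        intro ν φ
        rw [Xstep P γ hγ B hper q hq ν k φ, Zstep q (B 0) ν k φ, ih]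
  intro n _
  refine ⟨fun φ => key n μ φ, fun _ y => ?_⟩
  rw [key n μ, key n μ]
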